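/- An exact sequence X: 0 → X₁ → X₂ → X₃ → 0 of left R-modules is S-pure if and only if Hom_R(P, X) is exact for every S-pure projective R-module P, if and only if Hom_R(X, E) is exact for every S-pure injective R-module E, if and only if F ⊗_R X is exact for every S-pure flat right R-module F. -/

import Mathlib

open Function LinearMap

universe u

variable {R : Type u}

section Defs
variable [Ring R]

/-- The lifting property defining `S`-purity of an epimorphism `g`. -/
def SPureLift (S : Set (ModuleCat.{u} R)) {B C : Type u} [AddCommGroup B] [Module R B]
    [AddCommGroup C] [Module R C] (g : B →ₗ[R] C) : Prop :=
  ∀ U ∈ S, ∀ h : U →ₗ[R] C, ∃ h' : U →ₗ[R] B, g ∘ₗ h' = h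

/-- `0 → A → B → C → 0` is an `S`-pure exact sequence. -/
def IsSPureExact (S : Set (ModuleCat.{u} R)) {A B C : Type u} [AddCommGroup A] [Module R A]
    [AddCommGroup B] [Module R B] [AddCommGroup C] [Module R C]
    (f : A →ₗ[R] B) (g : B →ₗ[R] C) : Prop :=
  Function.Injective f ∧ Function.Surjective g ∧ Function.Exact f g ∧ SPureLift S g

/-- `E` is `S`-pure injective. -/
def IsSPureInjective (S : Set (ModuleCat.{u} R)) (E : Type u) [AddCommGroup E]
    [Module R E] : Prop :=
  ∀ ⦃A B C : Type u⦄ [AddCommGroup A] [Module R A] [AddCommGroup B] [Module R B]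
    [AddCommGroup C] [Module R C] (f : A →ₗ[R] B) (g : B →ₗ[R] C),
    IsSPureExact S f g → ∀ h : A →ₗ[R] E, ∃ h' : B →ₗ[R] E, h' ∘ₗ f = h

/-- `P` is `S`-pure projective. -/
def IsSPureProjective (S : Set (ModuleCat.{u} R)) (P : Type u) [AddCommGroup P]
    [Module R P] : Prop :=
  ∀ ⦃A B C : Type u⦄ [AddCommGroup A] [Module R A] [AddCommGroup B] [Module R B]
    [AddCommGroup C] [Module R C] (f : A →ₗ[R] B) (g : B →ₗ[R] C),
    IsSPureExact S f g → ∀ h : P →ₗ[R] C, ∃ h' : P →ₗ[R] B, g ∘ₗ h' = h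

/-- `N` is an `S`-pure submodule of `M`. -/
def IsSPureSubmodule (S : Set (ModuleCat.{u} R)) {M : Type u} [AddCommGroup M] [Module R M]
    (N : Submodule R M) : Prop :=
  SPureLift S N.mkQ

/-- `φ` is an `S`-pure monomorphism. -/
def IsSPureMono (S : Set (ModuleCat.{u} R)) {M E : Type u} [AddCommGroup M] [Module R M]
    [AddCommGroup E] [Module R E] (φ : M →ₗ[R] E) : Prop :=
  Function.Injective φ ∧ IsSPureSubmodule S (LinearMap.range φ)

/-- `M` is an `S`-pure essential extension of its submodule `N`. -/
def IsSPureEssentialExtension (S : Set (ModuleCat.{u} R)) {M : Type u} [AddCommGroup M]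
    [Module R M] (N : Submodule R M) : Prop :=
  IsSPureSubmodule S N ∧
    ∀ ⦃L : Type u⦄ [AddCommGroup L] [Module R L] (φ : M →ₗ[R] L),
      IsSPureMono S (φ ∘ₗ N.subtype) → Function.Injective φ

/-- `M` is a maximal `S`-pure essential extension of its submodule `N` : `M` is an
`S`-pure essential extension of `N` and no proper extension of `M` is an `S`-pure essential
extension of (the image of) `N`. -/
def IsMaxSPureEssentialExtension (S : Set (ModuleCat.{u} R)) {M : Type u} [AddCommGroup M]
    [Module R M] (N : Submodule R M) : Prop :=
  IsSPureEssentialExtension S N ∧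
    ∀ ⦃L : Type u⦄ [AddCommGroup L] [Module R L] (ι : M →ₗ[R] L), Function.Injective ι →
      IsSPureEssentialExtension S (LinearMap.range (ι ∘ₗ N.subtype)) → Function.Surjective ι

end Defs

section FlatDefs
variable [CommRing R]

/-- A (right) `R`-module `F` is `S`-pure flat. -/
def IsSPureFlat (S : Set (ModuleCat.{u} R)) (F : Type u) [AddCommGroup F]
    [Module R F] : Prop :=
  ∀ ⦃A B C : Type u⦄ [AddCommGroup A] [Module R A] [AddCommGroup B] [Module R B]
    [AddCommGroup C] [Module R C] (f : A →ₗ[R] B) (g : B →ₗ[R] C),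
    IsSPureExact S f g → Function.Injective (LinearMap.lTensor F f)

end FlatDefs

section Aux
variable [CommRing R]
open TensorProduct

section Delta
variable {m n : ℕ} (d : (Fin m → R) →ₗ[R] (Fin n → R))

noncomputable def deltaMap (M : Type u) [AddCommGroup M] [Module R M] :
    (Fin n → M) →ₗ[R] (Fin m → M) where
  toFun v := fun j => ∑ i, d (Pi.single j 1) i • v i
  map_add' v w := by funext j; simp [smul_add, Finset.sum_add_distrib]
  map_smul' r v := by funext j; simp [Finset.smul_sum, smul_comm r]

lemma deltaMap_apply (M : Type u) [AddCommGroup M] [Module R M] (v : Fin n → M) (j : Fin m) :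
    deltaMap d M v j = ∑ i, d (Pi.single j 1) i • v i := rfl

lemma deltaMap_natural {M N : Type u} [AddCommGroup M] [Module R M] [AddCommGroup N]
    [Module R N] (φ : M →ₗ[R] N) (v : Fin n → M) :
    deltaMap d N (fun i => φ (v i)) = fun j => φ (deltaMap d M v j) := by
  funext j
  simp [deltaMap_apply, map_sum, map_smul]

lemma lin_apply_sum {M : Type u} [AddCommGroup M] [Module R M] {k : ℕ}
    (q : (Fin k → R) →ₗ[R] M) (x : Fin k → R) :
    q x = ∑ i, x i • q (Pi.single i 1) := by
  rw [LinearMap.pi_apply_eq_sum_univ]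
  refine Finset.sum_congr rfl fun i _ => ?_
  congr 2
  funext j
  simp [Pi.single_apply, eq_comm]

noncomputable def Trp : Type u := (Fin m → R) ⧸ LinearMap.range (deltaMap d R)

noncomputable instance : AddCommGroup (Trp d) :=
  inferInstanceAs (AddCommGroup ((Fin m → R) ⧸ LinearMap.range (deltaMap d R)))

noncomputable instance : Module R (Trp d) :=
  inferInstanceAs (Module R ((Fin m → R) ⧸ LinearMap.range (deltaMap d R)))

noncomputable def trpMk : (Fin m → R) →ₗ[R] Trp d := Submodule.mkQ _

lemma trpMk_delta (u : Fin n → R) : trpMk d (deltaMap d R u) = 0 := by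
  exact (Submodule.Quotient.mk_eq_zero _).mpr ⟨u, rfl⟩

noncomputable def qMap (M : Type u) [AddCommGroup M] [Module R M] :
    (Fin m → M) →ₗ[R] Trp d ⊗[R] M :=
  ∑ j : Fin m, (TensorProduct.mk R (Trp d) M (trpMk d (Pi.single j 1))).comp (LinearMap.proj j)

lemma qMap_apply (M : Type u) [AddCommGroup M] [Module R M] (v : Fin m → M) :
    qMap d M v = ∑ j : Fin m, trpMk d (Pi.single j 1) ⊗ₜ[R] v j := by
  simp [qMap]

lemma qMap_surjective (M : Type u) [AddCommGroup M] [Module R M] :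
    Surjective (qMap d M) := by
  intro z
  induction z using TensorProduct.induction_on with
  | zero => exact ⟨0, map_zero _⟩
  | tmul t x =>
    obtain ⟨y, rfl⟩ := Submodule.mkQ_surjective _ t
    refine ⟨fun j => y j • x, ?_⟩
    rw [qMap_apply]
    calc ∑ j : Fin m, trpMk d (Pi.single j 1) ⊗ₜ[R] (y j • x)
        = ∑ j : Fin m, (y j • trpMk d (Pi.single j 1)) ⊗ₜ[R] x := by
          simp [TensorProduct.smul_tmul]
      _ = (∑ j : Fin m, y j • trpMk d (Pi.single j 1)) ⊗ₜ[R] x := by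
          rw [TensorProduct.sum_tmul]
      _ = trpMk d y ⊗ₜ[R] x := by
          congr 1
          exact (lin_apply_sum (trpMk d) y).symm
  | add z₁ z₂ h₁ h₂ =>
    obtain ⟨v₁, rfl⟩ := h₁
    obtain ⟨v₂, rfl⟩ := h₂
    exact ⟨v₁ + v₂, map_add _ _ _⟩

-- `q (δ v) = 0`
lemma qMap_delta (M : Type u) [AddCommGroup M] [Module R M] (v : Fin n → M) :
    qMap d M (deltaMap d M v) = 0 := by
  rw [qMap_apply]
  have : ∀ j : Fin m, trpMk d (Pi.single j 1) ⊗ₜ[R] (deltaMap d M v j)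
      = ∑ i : Fin n, (d (Pi.single j 1) i • trpMk d (Pi.single j 1)) ⊗ₜ[R] v i := by
    intro j
    rw [deltaMap_apply, TensorProduct.tmul_sum]
    refine Finset.sum_congr rfl fun i _ => ?_
    rw [TensorProduct.tmul_smul, TensorProduct.smul_tmul']
  simp_rw [this]
  rw [Finset.sum_comm]
  have : ∀ i : Fin n,
      ∑ j : Fin m, (d (Pi.single j 1) i • trpMk d (Pi.single j 1)) ⊗ₜ[R] v i = 0 := by
    intro i
    rw [← TensorProduct.sum_tmul]
    have h0 : (∑ j : Fin m, d (Pi.single j 1) i • trpMk d (Pi.single j 1)) = 0 := by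
      have : (∑ j : Fin m, d (Pi.single j 1) i • trpMk d (Pi.single j 1))
          = trpMk d (deltaMap d R (Pi.single i 1)) := by
        rw [lin_apply_sum (trpMk d) (deltaMap d R (Pi.single i 1))]
        refine Finset.sum_congr rfl fun j _ => ?_
        congr 1
        rw [deltaMap_apply]
        simp [Pi.single_apply]
      rw [this, trpMk_delta]
    rw [h0, TensorProduct.zero_tmul]
  simp [this]


noncomputable def betaAux (M : Type u) [AddCommGroup M] [Module R M] :
    (Fin m → R) →ₗ[R] M →ₗ[R] ((Fin m → M) ⧸ LinearMap.range (deltaMap d M)) where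
  toFun y := (Submodule.mkQ _).comp (LinearMap.pi fun j => y j • LinearMap.id)
  map_add' y₁ y₂ := by
    ext x
    simp only [LinearMap.comp_apply, LinearMap.add_apply, LinearMap.pi_apply,
      LinearMap.smul_apply, LinearMap.id_apply, Submodule.mkQ_apply]
    rw [← Submodule.Quotient.mk_add]
    congr 1
    funext j
    simp [add_smul]
  map_smul' r y := by
    ext x
    simp only [LinearMap.comp_apply, RingHom.id_apply, LinearMap.smul_apply, LinearMap.pi_apply,
      LinearMap.id_apply, Submodule.mkQ_apply]
    rw [← Submodule.Quotient.mk_smul]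
    congr 1
    funext j
    simp [mul_smul]

lemma betaAux_apply (M : Type u) [AddCommGroup M] [Module R M] (y : Fin m → R) (x : M) :
    betaAux d M y x = Submodule.Quotient.mk (fun j => y j • x) := rfl

lemma betaAux_delta (M : Type u) [AddCommGroup M] [Module R M] (u : Fin n → R) :
    betaAux d M (deltaMap d R u) = 0 := by
  ext x
  rw [betaAux_apply, LinearMap.zero_apply]
  rw [Submodule.Quotient.mk_eq_zero]
  refine ⟨fun i => u i • x, ?_⟩
  funext j
  rw [deltaMap_apply, deltaMap_apply, Finset.sum_smul]
  refine Finset.sum_congr rfl fun i _ => ?_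
  rw [smul_smul, smul_eq_mul]

noncomputable def beta (M : Type u) [AddCommGroup M] [Module R M] :
    Trp d ⊗[R] M →ₗ[R] ((Fin m → M) ⧸ LinearMap.range (deltaMap d M)) :=
  TensorProduct.lift (Submodule.liftQ _ (betaAux d M) (by
    rintro _ ⟨u, rfl⟩
    rw [LinearMap.mem_ker]
    exact betaAux_delta d M u))

lemma beta_qMap (M : Type u) [AddCommGroup M] [Module R M] (v : Fin m → M) :
    beta d M (qMap d M v) = Submodule.Quotient.mk v := by
  rw [qMap_apply, map_sum]
  have : ∀ j : Fin m, beta d M (trpMk d (Pi.single j 1) ⊗ₜ[R] v j)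
      = Submodule.Quotient.mk (Pi.single j (v j)) := by
    intro j
    have h1 : beta d M (trpMk d (Pi.single j 1) ⊗ₜ[R] v j)
        = betaAux d M (Pi.single j 1) (v j) := rfl
    rw [h1, betaAux_apply]
    congr 1
    funext j'
    rw [Pi.single_apply, Pi.single_apply]
    by_cases h : j' = j <;> simp [h]
  simp_rw [this]
  have hs : ∑ j : Fin m, (Submodule.Quotient.mk (Pi.single j (v j)) :
      (Fin m → M) ⧸ LinearMap.range (deltaMap d M))
      = Submodule.Quotient.mk (∑ j : Fin m, Pi.single j (v j)) :=
    (map_sum (Submodule.mkQ _) _ _).symm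
  rw [hs, Finset.univ_sum_single]

lemma qMap_eq_zero_iff (M : Type u) [AddCommGroup M] [Module R M] (v : Fin m → M) :
    qMap d M v = 0 ↔ v ∈ LinearMap.range (deltaMap d M) := by
  constructor
  · intro h
    have := beta_qMap d M v
    rw [h, map_zero] at this
    rwa [eq_comm, Submodule.Quotient.mk_eq_zero] at this
  · rintro ⟨u, rfl⟩
    exact qMap_delta d M u


lemma qMap_natural {M N : Type u} [AddCommGroup M] [Module R M] [AddCommGroup N]
    [Module R N] (φ : M →ₗ[R] N) (v : Fin m → M) :
    lTensor (Trp d) φ (qMap d M v) = qMap d N (fun i => φ (v i)) := by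
  rw [qMap_apply, qMap_apply, map_sum]
  rfl

end Delta

section Factor

/-- Factoring a linear map through a surjection whose kernel it kills. -/
lemma factor_thru {M N P : Type u} [AddCommGroup M] [Module R M] [AddCommGroup N] [Module R N]
    [AddCommGroup P] [Module R P] (q : M →ₗ[R] N) (hq : Surjective q) (k : M →ₗ[R] P)
    (hk : LinearMap.ker q ≤ LinearMap.ker k) : ∃ h : N →ₗ[R] P, h ∘ₗ q = k := by
  refine ⟨(Submodule.liftQ _ k hk) ∘ₗ (q.quotKerEquivOfSurjective hq).symm.toLinearMap, ?_⟩
  ext x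
  have h1 : (q.quotKerEquivOfSurjective hq).symm (q x) = Submodule.Quotient.mk x := by
    apply (q.quotKerEquivOfSurjective hq).injective
    rw [LinearEquiv.apply_symm_apply]
    rfl
  simp only [LinearMap.comp_apply, LinearEquiv.coe_toLinearMap, h1]
  rfl

end Factor

section Key

variable {m n : ℕ} (d : (Fin m → R) →ₗ[R] (Fin n → R))
variable {U : Type u} [AddCommGroup U] [Module R U]
variable (p : (Fin n → R) →ₗ[R] U) (hp : Surjective p) (hd : LinearMap.range d = LinearMap.ker p)

include hd in
lemma hom_to_ker {M : Type u} [AddCommGroup M] [Module R M] (h : U →ₗ[R] M) :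
    deltaMap d M (fun i => h (p (Pi.single i 1))) = 0 := by
  funext j
  rw [deltaMap_apply]
  have : ∀ i, d (Pi.single j 1) i • h (p (Pi.single i 1))
      = d (Pi.single j 1) i • (h ∘ₗ p) (Pi.single i 1) := fun i => rfl
  simp_rw [this]
  rw [← lin_apply_sum (h ∘ₗ p) (d (Pi.single j 1))]
  have hmem : d (Pi.single j 1) ∈ LinearMap.ker p := by
    rw [← hd]; exact ⟨_, rfl⟩
  simp only [LinearMap.comp_apply, LinearMap.mem_ker.mp hmem, map_zero]
  rfl

include hp hd in
lemma hom_of_ker {M : Type u} [AddCommGroup M] [Module R M] (v : Fin n → M)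
    (hv : deltaMap d M v = 0) :
    ∃ h : U →ₗ[R] M, ∀ i, h (p (Pi.single i 1)) = v i := by
  set ht : (Fin n → R) →ₗ[R] M := Fintype.linearCombination R v with hht
  have hker : LinearMap.ker p ≤ LinearMap.ker ht := by
    intro x hx
    rw [← hd] at hx
    obtain ⟨y, rfl⟩ := hx
    rw [LinearMap.mem_ker, ← LinearMap.comp_apply, lin_apply_sum (ht ∘ₗ d) y]
    have hz : ∀ j, (ht ∘ₗ d) (Pi.single j 1) = 0 := by
      intro j
      have : (ht ∘ₗ d) (Pi.single j 1) = deltaMap d M v j := by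
        rw [LinearMap.comp_apply, hht, Fintype.linearCombination_apply, deltaMap_apply]
      rw [this, hv]
      rfl
    simp [hz]
  obtain ⟨h, hh⟩ := factor_thru p hp ht hker
  refine ⟨h, fun i => ?_⟩
  have : h (p (Pi.single i 1)) = ht (Pi.single i 1) := by rw [← hh]; rfl
  rw [this, hht, Fintype.linearCombination_apply_single, one_smul]

include hp hd in
/-- The key lemma: for any short exact sequence, maps from `U` lift iff
tensoring with the transpose module `Trp d` preserves injectivity. -/
lemma key_lemma {A B C : Type u} [AddCommGroup A] [Module R A] [AddCommGroup B] [Module R B]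
    [AddCommGroup C] [Module R C] (f : A →ₗ[R] B) (g : B →ₗ[R] C)
    (hf : Injective f) (hg : Surjective g) (hfg : Function.Exact f g) :
    (∀ h : U →ₗ[R] C, ∃ h' : U →ₗ[R] B, g ∘ₗ h' = h) ↔ Injective (lTensor (Trp d) f) := by
  constructor
  · intro hlift
    rw [injective_iff_map_eq_zero]
    intro z hz
    obtain ⟨a, rfl⟩ := qMap_surjective d A z
    rw [qMap_natural d f a, qMap_eq_zero_iff] at hz
    obtain ⟨w, hw⟩ := hz
    -- `c = g ∘ w` is in the kernel of `delta`
    have hc : deltaMap d C (fun i => g (w i)) = 0 := by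
      rw [deltaMap_natural d g w]
      funext j
      have h1 : deltaMap d B w j = f (a j) := congrFun hw j
      show g (deltaMap d B w j) = 0
      rw [h1, hfg.apply_apply_eq_zero]
    obtain ⟨h, hh⟩ := hom_of_ker d p hp hd _ hc
    obtain ⟨h', hh'⟩ := hlift h
    set b : Fin n → B := fun i => h' (p (Pi.single i 1)) with hbdef
    have hb : deltaMap d B b = 0 := hom_to_ker d p hd h'
    have hgb : ∀ i, g (b i) = g (w i) := by
      intro i
      have : g (h' (p (Pi.single i 1))) = (g ∘ₗ h') (p (Pi.single i 1)) := rfl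
      rw [hbdef, this, hh', hh i]
    choose v hv using fun i => (hfg (w i - b i)).mp (by rw [map_sub, hgb i, sub_self])
    have hva : deltaMap d A v = a := by
      funext j
      apply hf
      have h2 : f (deltaMap d A v j) = deltaMap d B (fun i => f (v i)) j :=
        (congrFun (deltaMap_natural d f v) j).symm
      rw [h2]
      have h3 : (fun i => f (v i)) = w - b := funext fun i => by rw [hv i]; rfl
      rw [h3, map_sub]
      have h4 : deltaMap d B w j = f (a j) := congrFun hw j
      simp [hb, h4]
    rw [← hva]
    exact qMap_delta d A v
  · intro hinj h
    set c : Fin n → C := fun i => h (p (Pi.single i 1)) with hcdef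
    have hc : deltaMap d C c = 0 := hom_to_ker d p hd h
    choose w hw using fun i => hg (c i)
    have hgb : ∀ j, g (deltaMap d B w j) = 0 := by
      intro j
      have h1 : deltaMap d C (fun i => g (w i)) = fun j => g (deltaMap d B w j) :=
        deltaMap_natural d g w
      have h2 : (fun i => g (w i)) = c := funext fun i => hw i
      rw [h2, hc] at h1
      exact (congrFun h1 j).symm
    choose a ha using fun j => (hfg (deltaMap d B w j)).mp (hgb j)
    have hq : qMap d B (fun j => f (a j)) = 0 := by
      have h1 : (fun j => f (a j)) = deltaMap d B w := funext ha
      rw [h1]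
      exact qMap_delta d B w
    have h0 : qMap d A a = 0 := by
      apply hinj
      rw [qMap_natural d f a, hq, map_zero]
    rw [qMap_eq_zero_iff] at h0
    obtain ⟨v, hv⟩ := h0
    set b : Fin n → B := fun i => w i - f (v i) with hbdef
    have hb : deltaMap d B b = 0 := by
      have h1 : (fun i => f (v i)) = fun i => f (v i) := rfl
      have h2 : deltaMap d B b = deltaMap d B w - deltaMap d B (fun i => f (v i)) := by
        rw [← map_sub]
        rfl
      rw [h2, deltaMap_natural d f v, hv]
      funext j
      simp [ha j]
    obtain ⟨h₂, hh₂⟩ := hom_of_ker d p hp hd b hb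
    refine ⟨h₂, ?_⟩
    apply LinearMap.ext
    intro u
    obtain ⟨x, rfl⟩ := hp u
    have e1 : (g ∘ₗ h₂) (p x) = ((g ∘ₗ h₂) ∘ₗ p) x := rfl
    have e2 : h (p x) = (h ∘ₗ p) x := rfl
    rw [e1, e2, lin_apply_sum ((g ∘ₗ h₂) ∘ₗ p) x, lin_apply_sum (h ∘ₗ p) x]
    refine Finset.sum_congr rfl fun i _ => ?_
    congr 1
    show g (h₂ (p (Pi.single i 1))) = h (p (Pi.single i 1))
    rw [hh₂ i, hbdef]
    simp only [map_sub, hw i, hfg.apply_apply_eq_zero, sub_zero, hcdef]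

end Key


lemma exists_transpose (U : Type u) [AddCommGroup U] [Module R U]
    (hfpU : Module.FinitePresentation R U) :
    ∃ (T : Type u) (_ : AddCommGroup T) (_ : Module R T),
      ∀ {A B C : Type u} [AddCommGroup A] [Module R A] [AddCommGroup B] [Module R B]
        [AddCommGroup C] [Module R C] (f : A →ₗ[R] B) (g : B →ₗ[R] C),
        Injective f → Surjective g → Function.Exact f g →
        ((∀ h : U →ₗ[R] C, ∃ h' : U →ₗ[R] B, g ∘ₗ h' = h) ↔ Injective (lTensor T f)) := by
  haveI := hfpU
  obtain ⟨n, p, hp⟩ := Module.Finite.exists_fin' R U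
  obtain ⟨m, s, hs⟩ := Submodule.fg_iff_exists_fin_generating_family.mp
    (Module.FinitePresentation.fg_ker p hp)
  refine ⟨Trp (Fintype.linearCombination R s), inferInstance, inferInstance, ?_⟩
  intro A B C _ _ _ _ _ _ f g hf hg hfg
  exact key_lemma _ p hp (by rw [Fintype.range_linearCombination, hs]) f g hf hg hfg

end Aux

/-- an exact sequence `X : 0 → X₁ → X₂ → X₃ → 0` is `S`-pure iff `Hom(P, X)`
is exact for all `S`-pure projective `P`, iff `Hom(X, E)` is exact for all `S`-pure
injective `E`, iff `F ⊗ X` is exact for all `S`-pure flat `F`. -/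
theorem stmt8 [CommRing R] (S : Set (ModuleCat.{u} R))
    (hfp : ∀ U ∈ S, Module.FinitePresentation R U)
    {X₁ X₂ X₃ : Type u} [AddCommGroup X₁] [Module R X₁] [AddCommGroup X₂] [Module R X₂]
    [AddCommGroup X₃] [Module R X₃] (f : X₁ →ₗ[R] X₂) (g : X₂ →ₗ[R] X₃)
    (hf : Function.Injective f) (hg : Function.Surjective g) (hfg : Function.Exact f g) :
    (SPureLift S g ↔
      ∀ (P : Type u) [AddCommGroup P] [Module R P], IsSPureProjective S P →
        (Function.Injective (fun h : P →ₗ[R] X₁ => f ∘ₗ h) ∧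
         Function.Exact (fun h : P →ₗ[R] X₁ => f ∘ₗ h) (fun h : P →ₗ[R] X₂ => g ∘ₗ h) ∧
         Function.Surjective (fun h : P →ₗ[R] X₂ => g ∘ₗ h))) ∧
    (SPureLift S g ↔
      ∀ (E : Type u) [AddCommGroup E] [Module R E], IsSPureInjective S E →
        (Function.Injective (fun h : X₃ →ₗ[R] E => h ∘ₗ g) ∧
         Function.Exact (fun h : X₃ →ₗ[R] E => h ∘ₗ g) (fun h : X₂ →ₗ[R] E => h ∘ₗ f) ∧
         Function.Surjective (fun h : X₂ →ₗ[R] E => h ∘ₗ f))) ∧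
    (SPureLift S g ↔
      ∀ (F : Type u) [AddCommGroup F] [Module R F], IsSPureFlat S F →
        (Function.Injective (LinearMap.lTensor F f) ∧
         Function.Exact (LinearMap.lTensor F f) (LinearMap.lTensor F g) ∧
         Function.Surjective (LinearMap.lTensor F g))) := by
  have hexact_proj : ∀ (P : Type u) [AddCommGroup P] [Module R P],
      Function.Exact (fun h : P →ₗ[R] X₁ => f ∘ₗ h) (fun h : P →ₗ[R] X₂ => g ∘ₗ h) := by
    intro P _ _ k
    constructor
    · intro hk
      have hmem : ∀ x, k x ∈ LinearMap.range f := by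
        intro x
        have h0 : g (k x) = 0 := DFunLike.congr_fun hk x
        obtain ⟨y, hy⟩ := (hfg (k x)).mp h0
        exact ⟨y, hy⟩
      refine ⟨(LinearEquiv.ofInjective f hf).symm.toLinearMap ∘ₗ
        k.codRestrict (LinearMap.range f) hmem, ?_⟩
      ext x
      show f ((LinearEquiv.ofInjective f hf).symm ⟨k x, hmem x⟩) = k x
      have h1 : ∀ y : LinearMap.range f, f ((LinearEquiv.ofInjective f hf).symm y) = y := by
        intro y
        conv_rhs => rw [← (LinearEquiv.ofInjective f hf).apply_symm_apply y]
        rfl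
      rw [h1]
    · rintro ⟨h, rfl⟩
      ext x
      exact hfg.apply_apply_eq_zero (h x)
  have hexact_inj : ∀ (E : Type u) [AddCommGroup E] [Module R E],
      Function.Exact (fun h : X₃ →ₗ[R] E => h ∘ₗ g) (fun h : X₂ →ₗ[R] E => h ∘ₗ f) := by
    intro E _ _ k
    constructor
    · intro hk
      exact factor_thru g hg k (fun x hx => by
        obtain ⟨y, rfl⟩ := (hfg x).mp hx
        exact (DFunLike.congr_fun hk y : k (f y) = 0))
    · rintro ⟨h, rfl⟩
      ext x
      show h (g (f x)) = 0
      rw [hfg.apply_apply_eq_zero, map_zero]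
  refine ⟨⟨?_, ?_⟩, ⟨?_, ?_⟩, ?_, ?_⟩
  · -- pure → proj
    intro hpure P _ _ hP
    refine ⟨?_, hexact_proj P, ?_⟩
    · intro h₁ h₂ he
      apply LinearMap.ext; intro x
      exact hf (DFunLike.congr_fun he x)
    · intro h
      exact hP f g ⟨hf, hg, hfg, hpure⟩ h
  · -- proj → pure
    intro hyp U hU h
    have hproj : IsSPureProjective S ↥U := by
      intro A B C _ _ _ _ _ _ f' g' hSE h'
      exact hSE.2.2.2 U hU h'
    exact (hyp ↥U hproj).2.2 h
  · -- pure → inj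
    intro hpure E _ _ hE
    refine ⟨?_, hexact_inj E, ?_⟩
    · intro h₁ h₂ he
      apply LinearMap.ext; intro y
      obtain ⟨x, rfl⟩ := hg y
      exact DFunLike.congr_fun he x
    · intro h
      exact hE f g ⟨hf, hg, hfg, hpure⟩ h
  · -- inj → pure
    intro hyp U hU h
    obtain ⟨T, _, _, hT⟩ := exists_transpose (↥U) (hfp U hU)
    have hE : IsSPureInjective S (CharacterModule T) := by
      intro A B C _ _ _ _ _ _ f' g' hSE h'
      have hl : Injective (lTensor T f') :=
        (hT f' g' hSE.1 hSE.2.1 hSE.2.2.1).mp (hSE.2.2.2 U hU)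
      have hsur : Surjective (f'.lcomp R (CharacterModule T)) :=
        rTensor_injective_iff_lcomp_surjective.mp
          ((lTensor_inj_iff_rTensor_inj T f').mp hl)
      obtain ⟨h'', hh''⟩ := hsur h'
      exact ⟨h'', hh''⟩
    obtain ⟨-, -, hsurj⟩ := hyp (CharacterModule T) hE
    have hsur' : Surjective (f.lcomp R (CharacterModule T)) := hsurj
    have hl : Injective (lTensor T f) :=
      (lTensor_inj_iff_rTensor_inj T f).mpr
        (rTensor_injective_iff_lcomp_surjective.mpr hsur')
    exact (hT f g hf hg hfg).mpr hl h
  · -- pure → flat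
    intro hpure F _ _ hF
    exact ⟨hF f g ⟨hf, hg, hfg, hpure⟩, lTensor_exact F hfg hg,
      LinearMap.lTensor_surjective F hg⟩
  · -- flat → pure
    intro hyp U hU h
    obtain ⟨T, _, _, hT⟩ := exists_transpose (↥U) (hfp U hU)
    have hflat : IsSPureFlat S T := by
      intro A B C _ _ _ _ _ _ f' g' hSE
      exact (hT f' g' hSE.1 hSE.2.1 hSE.2.2.1).mp (hSE.2.2.2 U hU)
    exact (hT f g hf hg hfg).mpr (hyp T hflat).1 h
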